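/- arXiv:2512.24353 — 3 statements merged into one kernel-verified Lean document; each statement's English description precedes it below -/
import Mathlib

section
/- Let n ≥ 2, let E be a complex Hilbert space, let E_1,…,E_{n−1} be bounded operators on E, and for i = 1,…,n−1 set Φ_i(z) = E_i* + z E_{n−i} and M_{Φ_i} := (E_i*)~ + S∘(E_{n−i})~ on ℓ²(ℕ,E). Then: (1) for every i = 1,…,n−1, M_{Φ_i} commutes with the shift S and M_{Φ_i} = (M_{Φ_{n−i}})* S; (2) the operators M_{Φ_1},…,M_{Φ_{n−1}} pairwise commute if and only if E_1,…,E_{n−1} satisfy the commutativity condition. In particular, the tuple (M_{Φ_1},…,M_{Φ_{n−1}}, S) is commuting if and only if the commutativity condition holds. -/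
noncomputable section

open scoped ENNReal

namespace GammaModel

variable {E : Type*} [NormedAddCommGroup E] [NormedSpace ℂ E]

/-- The `E`-valued Hardy space `H²_E(𝔻)`, identified with `ℓ²(ℕ, E)`. -/
abbrev L2 (E : Type*) [NormedAddCommGroup E] [NormedSpace ℂ E] : Type _ :=
  lp (fun _ : ℕ => E) 2

/-- The underlying function of the unilateral shift. -/
def shiftFun (f : ℕ → E) : ℕ → E
  | 0 => 0
  | (k + 1) => f k

lemma rpow_toReal_two (x : ℝ) : x ^ ((2 : ℝ≥0∞)).toReal = x ^ (2 : ℕ) := by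
  rw [show ((2 : ℝ≥0∞)).toReal = ((2 : ℕ) : ℝ) by norm_num, Real.rpow_natCast]

lemma summable_sq_of_mem (f : L2 E) :
    Summable (fun k => ‖(f : ∀ _ : ℕ, E) k‖ ^ (2 : ℕ)) := by
  have h := lp.memℓp f
  rw [memℓp_gen_iff (by norm_num)] at h
  simpa [rpow_toReal_two] using h

lemma memℓp_shiftFun (f : L2 E) : Memℓp (shiftFun (f : ∀ _ : ℕ, E)) 2 := by
  rw [memℓp_gen_iff (by norm_num)]
  apply (summable_nat_add_iff 1).mp
  simpa [shiftFun, rpow_toReal_two] using summable_sq_of_mem f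

/-- The unilateral shift as a linear map on `ℓ²(ℕ, E)`. -/
def shiftLM : L2 E →ₗ[ℂ] L2 E where
  toFun f := ⟨shiftFun (f : ∀ _ : ℕ, E), memℓp_shiftFun f⟩
  map_add' f g := by
    ext k
    cases k <;> simp [shiftFun, lp.coeFn_add, Pi.add_apply] <;> first | rfl | exact (add_zero (0 : E)).symm
  map_smul' c f := by
    ext k
    cases k <;> simp [shiftFun, lp.coeFn_smul, Pi.smul_apply]

lemma norm_shiftLM (f : L2 E) : ‖shiftLM f‖ = ‖f‖ := by
  have h2 : (0:ℝ) < ((2 : ℝ≥0∞)).toReal := by norm_num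
  have hs := lp.norm_rpow_eq_tsum h2 (shiftLM f)
  have hf := lp.norm_rpow_eq_tsum h2 f
  have hsum : Summable (fun k => ‖(shiftLM f : ∀ _ : ℕ, E) k‖ ^ ((2:ℝ≥0∞)).toReal) := by
    have h := memℓp_shiftFun f
    rw [memℓp_gen_iff h2] at h
    exact h
  have key : ∑' k, ‖(shiftLM f : ∀ _ : ℕ, E) k‖ ^ ((2:ℝ≥0∞)).toReal
      = ∑' k, ‖(f : ∀ _ : ℕ, E) k‖ ^ ((2:ℝ≥0∞)).toReal := by
    rw [hsum.tsum_eq_zero_add]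
    simp [shiftLM, shiftFun]
  have : ‖shiftLM f‖ ^ ((2:ℝ≥0∞)).toReal = ‖f‖ ^ ((2:ℝ≥0∞)).toReal := by
    rw [hs, hf, key]
  rw [rpow_toReal_two, rpow_toReal_two] at this
  have h1 : (0:ℝ) ≤ ‖shiftLM f‖ := norm_nonneg _
  have h2' : (0:ℝ) ≤ ‖f‖ := norm_nonneg _
  nlinarith [this, h1, h2']

/-- The unilateral shift `S` on `ℓ²(ℕ, E)`: `(Sf)(0) = 0`, `(Sf)(k+1) = f(k)`. -/
def shiftL : L2 E →L[ℂ] L2 E :=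
  LinearMap.mkContinuous shiftLM 1 (fun f => by rw [norm_shiftLM]; simp)

@[simp] lemma shiftL_apply_zero (f : L2 E) : (shiftL f : ∀ _ : ℕ, E) 0 = 0 := rfl

@[simp] lemma shiftL_apply_succ (f : L2 E) (k : ℕ) :
    (shiftL f : ∀ _ : ℕ, E) (k + 1) = (f : ∀ _ : ℕ, E) k := rfl

lemma memℓp_diagFun (C : E →L[ℂ] E) (f : L2 E) :
    Memℓp (fun k => C ((f : ∀ _ : ℕ, E) k)) 2 := by
  rw [memℓp_gen_iff (by norm_num)]
  have hf := summable_sq_of_mem f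
  refine Summable.of_nonneg_of_le (f := fun k => ‖C‖ ^ (2:ℕ) * ‖(f : ∀ _ : ℕ, E) k‖ ^ (2:ℕ))
    (fun k => by positivity) (fun k => ?_) (hf.mul_left _)
  show ‖C ((f : ∀ _ : ℕ, E) k)‖ ^ ((2:ℝ≥0∞)).toReal ≤ ‖C‖ ^ (2:ℕ) * ‖(f : ∀ _ : ℕ, E) k‖ ^ (2:ℕ)
  rw [rpow_toReal_two, ← mul_pow]
  exact pow_le_pow_left₀ (norm_nonneg _) (C.le_opNorm _) 2

/-- The diagonal operator `C̃` on `ℓ²(ℕ, E)`: `(C̃ f)(k) = C (f k)`. -/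
def diagLM (C : E →L[ℂ] E) : L2 E →ₗ[ℂ] L2 E where
  toFun f := ⟨fun k => C ((f : ∀ _ : ℕ, E) k), memℓp_diagFun C f⟩
  map_add' f g := by ext k; simp [lp.coeFn_add, Pi.add_apply]; rfl
  map_smul' c f := by ext k; simp [lp.coeFn_smul, Pi.smul_apply]

lemma norm_diagLM (C : E →L[ℂ] E) (f : L2 E) : ‖diagLM C f‖ ≤ ‖C‖ * ‖f‖ := by
  have h2 : (0:ℝ) < ((2 : ℝ≥0∞)).toReal := by norm_num
  have hs := lp.norm_rpow_eq_tsum h2 (diagLM C f)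
  have hf := lp.norm_rpow_eq_tsum h2 f
  have hsum : Summable (fun k => ‖(diagLM C f : ∀ _ : ℕ, E) k‖ ^ ((2:ℝ≥0∞)).toReal) := by
    have h := memℓp_diagFun C f
    rw [memℓp_gen_iff h2] at h
    exact h
  have hle : ‖diagLM C f‖ ^ (2:ℕ) ≤ (‖C‖ * ‖f‖) ^ (2:ℕ) := by
    rw [← rpow_toReal_two, hs]
    calc ∑' k, ‖(diagLM C f : ∀ _ : ℕ, E) k‖ ^ ((2:ℝ≥0∞)).toReal
        ≤ ∑' k, ‖C‖ ^ (2:ℕ) * ‖(f : ∀ _ : ℕ, E) k‖ ^ (2:ℕ) := by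
          apply Summable.tsum_le_tsum _ hsum ((summable_sq_of_mem f).mul_left _)
          intro k
          show ‖(diagLM C f : ∀ _ : ℕ, E) k‖ ^ ((2:ℝ≥0∞)).toReal
            ≤ ‖C‖ ^ (2:ℕ) * ‖(f : ∀ _ : ℕ, E) k‖ ^ (2:ℕ)
          rw [rpow_toReal_two, ← mul_pow]
          exact pow_le_pow_left₀ (norm_nonneg _) (C.le_opNorm _) 2
      _ = ‖C‖ ^ (2:ℕ) * ∑' k, ‖(f : ∀ _ : ℕ, E) k‖ ^ (2:ℕ) := by rw [tsum_mul_left]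
      _ = (‖C‖ * ‖f‖) ^ (2:ℕ) := by
          rw [mul_pow]
          congr 1
          rw [← rpow_toReal_two ‖f‖, hf]
          exact (tsum_congr (fun k => by rw [rpow_toReal_two])).symm
  have := le_of_pow_le_pow_left₀ (by norm_num) (by positivity) hle
  exact this

/-- The operator `C̃` on `ℓ²(ℕ, E)` induced by `C : E →L[ℂ] E`, `(C̃ f)(k) = C (f k)`. -/
def diagL (C : E →L[ℂ] E) : L2 E →L[ℂ] L2 E :=
  LinearMap.mkContinuous (diagLM C) ‖C‖ (norm_diagLM C)

@[simp] lemma diagL_apply (C : E →L[ℂ] E) (f : L2 E) (k : ℕ) :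
    (diagL C f : ∀ _ : ℕ, E) k = C ((f : ∀ _ : ℕ, E) k) := rfl

end GammaModel
namespace GammaModel

variable {E : Type*} [NormedAddCommGroup E] [InnerProductSpace ℂ E] [CompleteSpace E]

/-- The commutativity condition for a family `E_1, …, E_{n-1}` (indexed here by `Fin (n-1)`,
with `Fin.rev i` playing the role of the index `n - i`):
`[E_i, E_j] = 0` and `[E_i*, E_{n-j}] = [E_j*, E_{n-i}]` for all `i, j`. -/
def CommutativityCondition {m : ℕ} (Es : Fin m → E →L[ℂ] E) : Prop :=
  (∀ i j, Es i * Es j = Es j * Es i) ∧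
  (∀ i j, ContinuousLinearMap.adjoint (Es i) * Es (Fin.rev j)
        - Es (Fin.rev j) * ContinuousLinearMap.adjoint (Es i)
      = ContinuousLinearMap.adjoint (Es j) * Es (Fin.rev i)
        - Es (Fin.rev i) * ContinuousLinearMap.adjoint (Es j))

/-- The Toeplitz operator `M_{Φ_i}` with symbol `Φ_i(z) = E_i* + z E_{n-i}`, i.e.
`(E_i*)~ + S ∘ (E_{n-i})~`, for a family indexed by `Fin (n-1)` (so `E_{n-i}` is
`Es (Fin.rev i)`). -/
def MPhi {m : ℕ} (Es : Fin m → E →L[ℂ] E) (i : Fin m) : L2 E →L[ℂ] L2 E :=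
  diagL (ContinuousLinearMap.adjoint (Es i)) + shiftL.comp (diagL (Es (Fin.rev i)))

end GammaModel

namespace GammaModel

variable {E : Type*} [NormedAddCommGroup E] [InnerProductSpace ℂ E] [CompleteSpace E]

local notation "⟪" x ", " y "⟫" => @inner ℂ _ _ x y

lemma memℓp_shiftStarFun (f : L2 E) : Memℓp (fun k => (f : ∀ _ : ℕ, E) (k + 1)) 2 := by
  rw [memℓp_gen_iff (by norm_num)]
  simpa [rpow_toReal_two] using (summable_nat_add_iff 1).2 (summable_sq_of_mem f)

/-- The backward shift `S*`. -/
def shiftStarLM : L2 E →ₗ[ℂ] L2 E where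
  toFun f := ⟨fun k => (f : ∀ _ : ℕ, E) (k + 1), memℓp_shiftStarFun f⟩
  map_add' f g := by ext k; simp [lp.coeFn_add, Pi.add_apply]; rfl
  map_smul' c f := by ext k; simp [lp.coeFn_smul, Pi.smul_apply]

lemma norm_shiftStarLM (f : L2 E) : ‖shiftStarLM f‖ ≤ ‖f‖ := by
  have h2 : (0:ℝ) < ((2 : ℝ≥0∞)).toReal := by norm_num
  have hs := lp.norm_rpow_eq_tsum h2 (shiftStarLM f)
  have hf := lp.norm_rpow_eq_tsum h2 f
  have hsumf := summable_sq_of_mem f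
  have hle : ‖shiftStarLM f‖ ^ (2:ℕ) ≤ ‖f‖ ^ (2:ℕ) := by
    rw [← rpow_toReal_two, ← rpow_toReal_two, hs, hf]
    have e1 : ∑' k, ‖(shiftStarLM f : ∀ _ : ℕ, E) k‖ ^ ((2:ℝ≥0∞)).toReal
        = ∑' k, ‖(f : ∀ _ : ℕ, E) (k + 1)‖ ^ ((2:ℝ≥0∞)).toReal := rfl
    have e2 : ∑' k, ‖(f : ∀ _ : ℕ, E) k‖ ^ ((2:ℝ≥0∞)).toReal
        = ‖(f : ∀ _ : ℕ, E) 0‖ ^ ((2:ℝ≥0∞)).toReal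
          + ∑' k, ‖(f : ∀ _ : ℕ, E) (k + 1)‖ ^ ((2:ℝ≥0∞)).toReal := by
      apply Summable.tsum_eq_zero_add
      simpa [rpow_toReal_two] using hsumf
    rw [e1, e2]
    have : (0:ℝ) ≤ ‖(f : ∀ _ : ℕ, E) 0‖ ^ ((2:ℝ≥0∞)).toReal := by
      rw [rpow_toReal_two]; positivity
    linarith
  exact le_of_pow_le_pow_left₀ (by norm_num) (by positivity) hle

/-- The backward shift `S*` as a continuous linear map. -/
def shiftStarL : L2 E →L[ℂ] L2 E :=
  LinearMap.mkContinuous shiftStarLM 1 (fun f => by simpa using norm_shiftStarLM f)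

@[simp] lemma shiftStarL_apply (f : L2 E) (k : ℕ) :
    (shiftStarL f : ∀ _ : ℕ, E) k = (f : ∀ _ : ℕ, E) (k + 1) := rfl

lemma lp_ext {f g : L2 E} (h : ∀ k, (f : ∀ _ : ℕ, E) k = (g : ∀ _ : ℕ, E) k) : f = g := by
  apply Subtype.ext; funext k; exact h k

lemma adjoint_shiftL : ContinuousLinearMap.adjoint (shiftL : L2 E →L[ℂ] L2 E) = shiftStarL := by
  symm
  rw [ContinuousLinearMap.eq_adjoint_iff]
  intro f g
  rw [lp.inner_eq_tsum, lp.inner_eq_tsum]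
  have hs : Summable (fun i => inner ℂ ((f : ∀ _ : ℕ, E) i) ((shiftL g : ∀ _ : ℕ, E) i)) :=
    lp.summable_inner f (shiftL g)
  rw [hs.tsum_eq_zero_add]
  simp

lemma adjoint_diagL (C : E →L[ℂ] E) :
    ContinuousLinearMap.adjoint (diagL C : L2 E →L[ℂ] L2 E)
      = diagL (ContinuousLinearMap.adjoint C) := by
  symm
  rw [ContinuousLinearMap.eq_adjoint_iff]
  intro f g
  rw [lp.inner_eq_tsum, lp.inner_eq_tsum]
  exact tsum_congr fun k => by simp [ContinuousLinearMap.adjoint_inner_left]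

lemma shiftStar_shift : (shiftStarL : L2 E →L[ℂ] L2 E) ∘L shiftL = ContinuousLinearMap.id ℂ _ := by
  apply ContinuousLinearMap.ext
  intro f
  apply lp_ext
  intro k
  simp

lemma shift_diag_comm (C : E →L[ℂ] E) :
    (shiftL : L2 E →L[ℂ] L2 E) ∘L diagL C = diagL C ∘L shiftL := by
  apply ContinuousLinearMap.ext
  intro f
  apply lp_ext
  intro k
  cases k <;> simp

lemma mphi_apply_zero {m : ℕ} (Es : Fin m → E →L[ℂ] E) (i : Fin m) (f : L2 E) :
    (MPhi Es i f : ∀ _ : ℕ, E) 0 = ContinuousLinearMap.adjoint (Es i) ((f : ∀ _ : ℕ, E) 0) := by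
  show ((diagL (ContinuousLinearMap.adjoint (Es i)) f
      + shiftL (diagL (Es (Fin.rev i)) f)) : ∀ _ : ℕ, E) 0 = _
  simp

lemma mphi_apply_succ {m : ℕ} (Es : Fin m → E →L[ℂ] E) (i : Fin m) (f : L2 E) (k : ℕ) :
    (MPhi Es i f : ∀ _ : ℕ, E) (k + 1)
      = ContinuousLinearMap.adjoint (Es i) ((f : ∀ _ : ℕ, E) (k + 1))
        + Es (Fin.rev i) ((f : ∀ _ : ℕ, E) k) := by
  show ((diagL (ContinuousLinearMap.adjoint (Es i)) f
      + shiftL (diagL (Es (Fin.rev i)) f)) : ∀ _ : ℕ, E) (k + 1) = _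
  simp

lemma mphi_shift_comm {m : ℕ} (Es : Fin m → E →L[ℂ] E) (i : Fin m) :
    MPhi Es i * shiftL = shiftL * MPhi Es i := by
  apply ContinuousLinearMap.ext
  intro f
  apply lp_ext
  intro k
  simp only [ContinuousLinearMap.mul_apply]
  match k with
  | 0 => simp [mphi_apply_zero]
  | (k + 1) => cases k <;> simp [mphi_apply_succ, mphi_apply_zero]

lemma three_add {M : Type*} [AddCommMonoid M] {a b c a' b' c' : M}
    (h1 : a = a') (h2 : b + c = b' + c') : a + b + c = a' + b' + c' := by
  rw [h1, add_assoc, add_assoc, h2]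

lemma four_add {M : Type*} [AddCommMonoid M] {a b c d a' b' c' d' : M}
    (h1 : a = a') (h2 : b + c = b' + c') (h3 : d = d') :
    a + b + (c + d) = a' + b' + (c' + d') := by
  rw [h1, h3]
  calc a' + b + (c + d') = a' + (b + c) + d' := by abel
    _ = a' + (b' + c') + d' := by rw [h2]
    _ = a' + b' + (c' + d') := by abel

end GammaModel

open GammaModel

/-- For operators `E_1, …, E_{n-1}` on `E` and the Toeplitz operators
`M_{Φ_i} = (E_i*)~ + S∘(E_{n-i})~` on `ℓ²(ℕ,E)`: (1) each `M_{Φ_i}` commutes with the shift `S`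
and `M_{Φ_i} = (M_{Φ_{n-i}})* S`; (2) the `M_{Φ_i}` pairwise commute iff `E_1, …, E_{n-1}`
satisfy the commutativity condition; in particular `(M_{Φ_1}, …, M_{Φ_{n-1}}, S)` is a
commuting tuple iff the commutativity condition holds. -/
theorem mphi_commute_iff {n : ℕ} (hn : 2 ≤ n)
    {E : Type*} [NormedAddCommGroup E] [InnerProductSpace ℂ E] [CompleteSpace E]
    (Es : Fin (n - 1) → E →L[ℂ] E) :
    (∀ i, MPhi Es i * shiftL = shiftL * MPhi Es i ∧
      MPhi Es i = ContinuousLinearMap.adjoint (MPhi Es (Fin.rev i)) * shiftL) ∧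
    ((∀ i j, MPhi Es i * MPhi Es j = MPhi Es j * MPhi Es i) ↔ CommutativityCondition Es) ∧
    (((∀ i j, MPhi Es i * MPhi Es j = MPhi Es j * MPhi Es i) ∧
        (∀ i, MPhi Es i * shiftL = shiftL * MPhi Es i)) ↔ CommutativityCondition Es) := by
  have part1b : ∀ i : Fin (n - 1),
      MPhi Es i = ContinuousLinearMap.adjoint (MPhi Es (Fin.rev i)) * shiftL := by
    intro i
    have hrw : MPhi Es (Fin.rev i)
        = diagL (ContinuousLinearMap.adjoint (Es (Fin.rev i))) + shiftL ∘L diagL (Es i) := by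
      rw [MPhi, Fin.rev_rev]
    rw [hrw, map_add, ContinuousLinearMap.adjoint_comp, adjoint_diagL, adjoint_diagL,
      adjoint_shiftL, ContinuousLinearMap.adjoint_adjoint]
    apply ContinuousLinearMap.ext
    intro f
    apply lp_ext
    intro k
    cases k with
    | zero =>
      rw [mphi_apply_zero]
      simp
    | succ k =>
      rw [mphi_apply_succ]
      simp only [ContinuousLinearMap.mul_apply, ContinuousLinearMap.add_apply,
        ContinuousLinearMap.comp_apply, lp.coeFn_add, Pi.add_apply, diagL_apply,
        shiftStarL_apply, shiftL_apply_succ]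
      exact add_comm _ _
  have forward : (∀ i j, MPhi Es i * MPhi Es j = MPhi Es j * MPhi Es i)
      → CommutativityCondition Es := by
    intro H
    have eval : ∀ (i j : Fin (n - 1)) (x : E) (k : ℕ),
        (MPhi Es i (MPhi Es j (lp.single 2 0 x)) : ∀ _ : ℕ, E) k
          = (MPhi Es j (MPhi Es i (lp.single 2 0 x)) : ∀ _ : ℕ, E) k := by
      intro i j x k
      rw [← ContinuousLinearMap.comp_apply, ← ContinuousLinearMap.comp_apply,
        ← ContinuousLinearMap.mul_def, ← ContinuousLinearMap.mul_def, H i j]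
    have hsingle0 : ∀ x : E, ((lp.single 2 0 x : L2 E) : ∀ _ : ℕ, E) 0 = x := fun x => by
      simp [lp.single_apply]
    have hsingleS : ∀ (x : E) (k : ℕ), ((lp.single 2 0 x : L2 E) : ∀ _ : ℕ, E) (k + 1) = 0 :=
      fun x k => by simp [lp.single_apply]
    have key0 : ∀ i j : Fin (n - 1),
        ContinuousLinearMap.adjoint (Es i) * ContinuousLinearMap.adjoint (Es j)
          = ContinuousLinearMap.adjoint (Es j) * ContinuousLinearMap.adjoint (Es i) := by
      intro i j
      ext x
      have h := eval i j x 0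
      simp only [mphi_apply_zero, hsingle0] at h
      simpa using h
    have key1 : ∀ i j : Fin (n - 1),
        ContinuousLinearMap.adjoint (Es i) * Es (Fin.rev j)
            + Es (Fin.rev i) * ContinuousLinearMap.adjoint (Es j)
          = ContinuousLinearMap.adjoint (Es j) * Es (Fin.rev i)
            + Es (Fin.rev j) * ContinuousLinearMap.adjoint (Es i) := by
      intro i j
      ext x
      have h := eval i j x (0 + 1)
      simp only [mphi_apply_succ, mphi_apply_zero, hsingle0, hsingleS, map_zero,
        zero_add, add_zero, map_add] at h
      simpa using h
    have key2 : ∀ i j : Fin (n - 1),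
        Es (Fin.rev i) * Es (Fin.rev j) = Es (Fin.rev j) * Es (Fin.rev i) := by
      intro i j
      ext x
      have h := eval i j x (0 + 1 + 1)
      simp only [mphi_apply_succ, mphi_apply_zero, hsingle0, hsingleS, map_zero,
        zero_add, add_zero, map_add] at h
      simpa using h
    constructor
    · intro i j
      have h := congrArg star (key0 j i)
      simpa only [← ContinuousLinearMap.star_eq_adjoint, star_mul, star_star] using h
    · intro i j
      rw [sub_eq_sub_iff_add_eq_add]
      exact key1 i j
  have backward : CommutativityCondition Es
      → ∀ i j, MPhi Es i * MPhi Es j = MPhi Es j * MPhi Es i := by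
    rintro ⟨h1, h2⟩ i j
    have hA : ContinuousLinearMap.adjoint (Es i) * ContinuousLinearMap.adjoint (Es j)
        = ContinuousLinearMap.adjoint (Es j) * ContinuousLinearMap.adjoint (Es i) := by
      simp only [← ContinuousLinearMap.star_eq_adjoint]
      rw [← star_mul, ← star_mul, h1 j i]
    have hMid : ContinuousLinearMap.adjoint (Es i) * Es (Fin.rev j)
            + Es (Fin.rev i) * ContinuousLinearMap.adjoint (Es j)
          = ContinuousLinearMap.adjoint (Es j) * Es (Fin.rev i)
            + Es (Fin.rev j) * ContinuousLinearMap.adjoint (Es i) := by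
      rw [← sub_eq_sub_iff_add_eq_add]
      exact h2 i j
    have hB := h1 (Fin.rev i) (Fin.rev j)
    apply ContinuousLinearMap.ext
    intro f
    apply lp_ext
    intro k
    simp only [ContinuousLinearMap.mul_apply]
    match k with
    | 0 =>
      simp only [mphi_apply_zero]
      have := ContinuousLinearMap.ext_iff.1 hA ((f : ∀ _ : ℕ, E) 0)
      simpa using this
    | 1 =>
      show (MPhi Es i (MPhi Es j f) : ∀ _ : ℕ, E) (0 + 1)
        = (MPhi Es j (MPhi Es i f) : ∀ _ : ℕ, E) (0 + 1)
      simp only [mphi_apply_succ, mphi_apply_zero, map_add]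
      have e1 := ContinuousLinearMap.ext_iff.1 hA ((f : ∀ _ : ℕ, E) (0 + 1))
      have e2 := ContinuousLinearMap.ext_iff.1 hMid ((f : ∀ _ : ℕ, E) 0)
      simp only [ContinuousLinearMap.mul_apply, ContinuousLinearMap.add_apply] at e1 e2
      exact three_add e1 e2
    | (k + 2) =>
      simp only [mphi_apply_succ, map_add]
      have e1 := ContinuousLinearMap.ext_iff.1 hA ((f : ∀ _ : ℕ, E) (k + 1 + 1))
      have e2 := ContinuousLinearMap.ext_iff.1 hMid ((f : ∀ _ : ℕ, E) (k + 1))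
      have e3 := ContinuousLinearMap.ext_iff.1 hB ((f : ∀ _ : ℕ, E) k)
      simp only [ContinuousLinearMap.mul_apply, ContinuousLinearMap.add_apply] at e1 e2 e3
      exact four_add e1 e2 e3
  refine ⟨fun i => ⟨mphi_shift_comm Es i, part1b i⟩, ⟨forward, backward⟩, ?_⟩
  exact ⟨fun h => forward h.1, fun h => ⟨backward h, fun i => mphi_shift_comm Es i⟩⟩
end
end

section
/- (Factorization of isometric dilations.) Let T be a contraction on a complex Hilbert space H. Let V be an isometry on a complex Hilbert space K and let E : H → K be a linear isometry with E T* = V* E. Let V_m be an isometry on a complex Hilbert space K_m and E_m : H → K_m a linear isometry with E_m T* = V_m* E_m, and assume minimality: K_m equals the closed linear span of ⋃_{k≥0} V_mᵏ(E_m(H)). Then there exists a unique linear isometry Ξ : K_m → K such that E = Ξ ∘ E_m and Ξ V_m* = V* Ξ. -/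
noncomputable section

open ContinuousLinearMap
open scoped ComplexInnerProductSpace

set_option linter.unusedSectionVars false
set_option maxHeartbeats 1000000

section MyAux

variable {H K : Type*} [NormedAddCommGroup H] [InnerProductSpace ℂ H]
  [NormedAddCommGroup K] [InnerProductSpace ℂ K] [CompleteSpace H] [CompleteSpace K]

lemma myIso_inner (V : K →L[ℂ] K) (hV : ∀ x, ‖V x‖ = ‖x‖) (x y : K) :
    ⟪V x, V y⟫ = ⟪x, y⟫ :=
  LinearIsometry.inner_map_map ⟨(V : K →ₗ[ℂ] K), hV⟩ x y

lemma myAdj_comp (V : K →L[ℂ] K) (hV : ∀ x, ‖V x‖ = ‖x‖) (x : K) :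
    adjoint V (V x) = x := by
  apply ext_inner_right ℂ
  intro y
  rw [adjoint_inner_left]
  exact myIso_inner V hV x y

lemma myIso_pow_inner (V : K →L[ℂ] K) (hV : ∀ x, ‖V x‖ = ‖x‖) (j : ℕ) (x y : K) :
    ⟪(V ^ j) x, (V ^ j) y⟫ = ⟪x, y⟫ := by
  induction j with
  | zero => simp
  | succ j ih =>
    rw [pow_succ', mul_apply_eq_comp, mul_apply_eq_comp, myIso_inner V hV, ih]

lemma myDil_inner (T : H →L[ℂ] H) (V : K →L[ℂ] K)
    (E : H →ₗᵢ[ℂ] K) (hE : ∀ h : H, E (adjoint T h) = adjoint V (E h))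
    (d : ℕ) (h g : H) :
    ⟪(E h : K), (V ^ d) (E g)⟫ = ⟪((adjoint T) ^ d) h, g⟫ := by
  induction d generalizing h with
  | zero => simp [E.inner_map_map]
  | succ d ih =>
    rw [pow_succ', mul_apply_eq_comp, ← adjoint_inner_left, ← hE, ih, pow_succ, mul_apply_eq_comp]

lemma myDil_inner_pow (T : H →L[ℂ] H) (V : K →L[ℂ] K) (hV : ∀ x, ‖V x‖ = ‖x‖)
    (E : H →ₗᵢ[ℂ] K) (hE : ∀ h : H, E (adjoint T h) = adjoint V (E h))
    (j k : ℕ) (h g : H) :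
    ⟪(V ^ j) (E h), (V ^ k) (E g)⟫ =
      if j ≤ k then ⟪((adjoint T) ^ (k - j)) h, g⟫
      else ⟪h, ((adjoint T) ^ (j - k)) g⟫ := by
  have main : ∀ j d (h g : H),
      ⟪(V ^ j) (E h), (V ^ (j + d)) (E g)⟫ = ⟪((adjoint T) ^ d) h, g⟫ := by
    intro j d h g
    rw [pow_add, mul_apply_eq_comp, myIso_pow_inner V hV, myDil_inner T V E hE]
  rcases le_or_gt j k with hjk | hjk
  · rw [if_pos hjk]
    obtain ⟨d, rfl⟩ := Nat.exists_eq_add_of_le hjk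
    rw [main, Nat.add_sub_cancel_left]
  · rw [if_neg (not_le.mpr hjk)]
    rw [← inner_conj_symm]
    obtain ⟨d, rfl⟩ := Nat.exists_eq_add_of_le hjk.le
    rw [main, Nat.add_sub_cancel_left, inner_conj_symm]

end MyAux

/-- (Factorization of isometric dilations.) If `(V, E)` is an isometric
dilation of a contraction `T` and `(V_m, E_m)` is a *minimal* isometric dilation of `T`, then
there is a unique linear isometry `Ξ : K_m → K` with `E = Ξ ∘ E_m` and `Ξ V_m* = V* Ξ`. -/
theorem factorization_of_isometric_dilations
    {H K Km : Type*} [NormedAddCommGroup H] [InnerProductSpace ℂ H] [CompleteSpace H]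
    [NormedAddCommGroup K] [InnerProductSpace ℂ K] [CompleteSpace K]
    [NormedAddCommGroup Km] [InnerProductSpace ℂ Km] [CompleteSpace Km]
    (T : H →L[ℂ] H) (hT : ‖T‖ ≤ 1)
    (V : K →L[ℂ] K) (hV : ∀ x, ‖V x‖ = ‖x‖)
    (E : H →ₗᵢ[ℂ] K) (hE : ∀ h : H, E (adjoint T h) = adjoint V (E h))
    (Vm : Km →L[ℂ] Km) (hVm : ∀ x, ‖Vm x‖ = ‖x‖)
    (Em : H →ₗᵢ[ℂ] Km) (hEm : ∀ h : H, Em (adjoint T h) = adjoint Vm (Em h))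
    (hmin : (Submodule.span ℂ (⋃ k : ℕ, (Vm ^ k) '' Set.range Em)).topologicalClosure = ⊤) :
    ∃! Xi : Km →ₗᵢ[ℂ] K,
      (∀ h : H, Xi (Em h) = E h) ∧
      (∀ x : Km, Xi (adjoint Vm x) = adjoint V (Xi x)) := by
  classical
  set gm : ℕ × H → Km := fun p => (Vm ^ p.1) (Em p.2) with hgm_def
  set gk : ℕ × H → K := fun p => (V ^ p.1) (E p.2) with hgk_def
  set tm : ((ℕ × H) →₀ ℂ) →ₗ[ℂ] Km := Finsupp.linearCombination ℂ gm with htm_def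
  set tk : ((ℕ × H) →₀ ℂ) →ₗ[ℂ] K := Finsupp.linearCombination ℂ gk with htk_def
  -- the key inner-product identity
  have key : ∀ p q : ℕ × H, ⟪gm p, gm q⟫ = ⟪gk p, gk q⟫ := by
    intro p q
    rw [hgm_def, hgk_def]
    simp only
    rw [myDil_inner_pow T Vm hVm Em hEm, myDil_inner_pow T V hV E hE]
  have inner_t : ∀ c c' : (ℕ × H) →₀ ℂ, ⟪tm c, tm c'⟫ = ⟪tk c, tk c'⟫ := by
    intro c c'
    induction c using Finsupp.induction_linear with
    | zero => simp
    | add f g hf hg => simp only [map_add, inner_add_left, hf, hg]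
    | single p a =>
      induction c' using Finsupp.induction_linear with
      | zero => simp
      | add f g hf hg => simp only [map_add, inner_add_right, hf, hg]
      | single q b =>
        simp only [htm_def, htk_def, Finsupp.linearCombination_single,
          inner_smul_left, inner_smul_right, key p q]
  have norm_t : ∀ c : (ℕ × H) →₀ ℂ, ‖tk c‖ = ‖tm c‖ := by
    intro c
    have h1 : ‖tk c‖ ^ 2 = ‖tm c‖ ^ 2 := by
      rw [← inner_self_eq_norm_sq (𝕜 := ℂ), ← inner_self_eq_norm_sq (𝕜 := ℂ),
        inner_t c c]
    calc ‖tk c‖ = Real.sqrt (‖tk c‖ ^ 2) := (Real.sqrt_sq (norm_nonneg _)).symm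
      _ = Real.sqrt (‖tm c‖ ^ 2) := by rw [h1]
      _ = ‖tm c‖ := Real.sqrt_sq (norm_nonneg _)
  set D : Submodule ℂ Km := LinearMap.range tm with hD_def
  have hDspan : D = Submodule.span ℂ (⋃ k : ℕ, (Vm ^ k) '' Set.range Em) := by
    rw [hD_def, htm_def, Finsupp.range_linearCombination]
    congr 1
    ext x
    simp only [Set.mem_range, Set.mem_iUnion, Set.mem_image, hgm_def]
    constructor
    · rintro ⟨⟨k, h⟩, rfl⟩; exact ⟨k, Em h, ⟨h, rfl⟩, rfl⟩
    · rintro ⟨k, y, ⟨h, rfl⟩, rfl⟩; exact ⟨(k, h), rfl⟩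
  have hdense : Dense (D : Set Km) := by
    rw [hDspan]
    exact Submodule.dense_iff_topologicalClosure_eq_top.mpr hmin
  have hker : LinearMap.ker tm ≤ LinearMap.ker tk := by
    intro c hc
    rw [LinearMap.mem_ker] at hc ⊢
    have := norm_t c
    rw [hc, norm_zero] at this
    exact norm_eq_zero.mp this
  let f0 : D →ₗ[ℂ] K :=
    (Submodule.liftQ (LinearMap.ker tm) tk hker) ∘ₗ
      (LinearMap.quotKerEquivRange tm).symm.toLinearMap
  have hf0 : ∀ c : (ℕ × H) →₀ ℂ, f0 ⟨tm c, LinearMap.mem_range_self tm c⟩ = tk c := by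
    intro c
    have h1 : (LinearMap.quotKerEquivRange tm) (Submodule.Quotient.mk c) =
        ⟨tm c, LinearMap.mem_range_self tm c⟩ :=
      Subtype.ext (LinearMap.quotKerEquivRange_apply_mk tm c)
    have h2 : (LinearMap.quotKerEquivRange tm).symm
        ⟨tm c, LinearMap.mem_range_self tm c⟩ = Submodule.Quotient.mk c := by
      rw [← h1, LinearEquiv.symm_apply_apply]
    simp only [f0, LinearMap.coe_comp, Function.comp_apply, LinearEquiv.coe_coe, h2,
      Submodule.liftQ_apply]
  have hf0norm : ∀ x : D, ‖f0 x‖ = ‖x‖ := by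
    rintro ⟨x, hx⟩
    obtain ⟨c, rfl⟩ := hx
    show ‖f0 ⟨tm c, LinearMap.mem_range_self tm c⟩‖ = ‖tm c‖
    rw [hf0 c]
    exact norm_t c
  let fI : D →ₗᵢ[ℂ] K := ⟨f0, hf0norm⟩
  let eD : D →L[ℂ] Km := D.subtypeL
  have hdr : DenseRange eD := by
    have : Set.range eD = (D : Set Km) := Subtype.range_val
    rw [DenseRange, this]
    exact hdense
  have hui : IsUniformInducing eD := isometry_subtype_coe.isUniformInducing
  let Xi0 : Km →L[ℂ] K := (fI.toContinuousLinearMap).extend eD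
  have hXi0 : ∀ x : D, Xi0 x = fI x := fun x =>
    ContinuousLinearMap.extend_eq _ hdr hui x
  have hXi0tm : ∀ c : (ℕ × H) →₀ ℂ, Xi0 (tm c) = tk c := by
    intro c
    have := hXi0 ⟨tm c, LinearMap.mem_range_self tm c⟩
    rw [this]
    exact hf0 c
  have hXi0norm : ∀ x : Km, ‖Xi0 x‖ = ‖x‖ := by
    intro x
    refine hdr.induction_on x (isClosed_eq Xi0.continuous.norm continuous_norm) ?_
    intro a
    show ‖Xi0 (a : Km)‖ = ‖(a : Km)‖
    rw [hXi0 a]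
    exact fI.norm_map a
  let Xi : Km →ₗᵢ[ℂ] K := ⟨(Xi0 : Km →ₗ[ℂ] K), hXi0norm⟩
  -- condition 1
  have hsm : ∀ h : H, tm (Finsupp.single (0, h) 1) = Em h := by
    intro h
    rw [htm_def, Finsupp.linearCombination_single, one_smul, hgm_def]
    simp
  have hsk : ∀ h : H, tk (Finsupp.single (0, h) 1) = E h := by
    intro h
    rw [htk_def, Finsupp.linearCombination_single, one_smul, hgk_def]
    simp
  have hc1 : ∀ h : H, Xi (Em h) = E h := by
    intro h
    show Xi0 (Em h) = E h
    rw [← hsm h, hXi0tm, hsk h]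
  -- condition 2 via mapDomain
  let d : ℕ × H → ℕ × H := fun p =>
    match p with
    | (0, h) => (0, adjoint T h)
    | (k + 1, h) => (k, h)
  have hgm_d : ∀ p, adjoint Vm (gm p) = gm (d p) := by
    rintro ⟨k, h⟩
    cases k with
    | zero =>
      show adjoint Vm ((Vm ^ 0) (Em h)) = (Vm ^ 0) (Em (adjoint T h))
      simp only [pow_zero, one_apply]
      exact (hEm h).symm
    | succ k =>
      show adjoint Vm ((Vm ^ (k + 1)) (Em h)) = (Vm ^ k) (Em h)
      rw [pow_succ', mul_apply_eq_comp, myAdj_comp Vm hVm]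
  have hgk_d : ∀ p, adjoint V (gk p) = gk (d p) := by
    rintro ⟨k, h⟩
    cases k with
    | zero =>
      show adjoint V ((V ^ 0) (E h)) = (V ^ 0) (E (adjoint T h))
      simp only [pow_zero, one_apply]
      exact (hE h).symm
    | succ k =>
      show adjoint V ((V ^ (k + 1)) (E h)) = (V ^ k) (E h)
      rw [pow_succ', mul_apply_eq_comp, myAdj_comp V hV]
  have htm_d : ∀ c : (ℕ × H) →₀ ℂ,
      adjoint Vm (tm c) = tm (Finsupp.mapDomain d c) := by
    intro c
    rw [htm_def, Finsupp.linearCombination_mapDomain]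
    rw [show (adjoint Vm) ((Finsupp.linearCombination ℂ gm) c) =
      ((adjoint Vm : Km →ₗ[ℂ] Km)) ((Finsupp.linearCombination ℂ gm) c) from rfl]
    rw [Finsupp.apply_linearCombination]
    rw [show ⇑((adjoint Vm : Km →L[ℂ] Km) : Km →ₗ[ℂ] Km) ∘ gm = gm ∘ d from
      funext fun p => hgm_d p]
  have htk_d : ∀ c : (ℕ × H) →₀ ℂ,
      adjoint V (tk c) = tk (Finsupp.mapDomain d c) := by
    intro c
    rw [htk_def, Finsupp.linearCombination_mapDomain]
    rw [show (adjoint V) ((Finsupp.linearCombination ℂ gk) c) =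
      ((adjoint V : K →ₗ[ℂ] K)) ((Finsupp.linearCombination ℂ gk) c) from rfl]
    rw [Finsupp.apply_linearCombination]
    rw [show ⇑((adjoint V : K →L[ℂ] K) : K →ₗ[ℂ] K) ∘ gk = gk ∘ d from
      funext fun p => hgk_d p]
  have hc2 : ∀ x : Km, Xi (adjoint Vm x) = adjoint V (Xi x) := by
    intro x
    show Xi0 (adjoint Vm x) = adjoint V (Xi0 x)
    refine hdr.induction_on x (isClosed_eq (Xi0.continuous.comp (adjoint Vm).continuous)
      ((adjoint V).continuous.comp Xi0.continuous)) ?_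
    rintro ⟨y, hy⟩
    obtain ⟨c, rfl⟩ := hy
    show Xi0 (adjoint Vm (tm c)) = adjoint V (Xi0 (tm c))
    rw [htm_d, hXi0tm, hXi0tm, ← htk_d]
  refine ⟨Xi, ⟨hc1, hc2⟩, ?_⟩
  -- uniqueness
  rintro Xi' ⟨h1, h2⟩
  have hcomm : ∀ x : Km, Xi' (Vm x) = V (Xi' x) := by
    intro x
    have haa : ⟪Xi' (Vm x), Xi' (Vm x)⟫ = ⟪x, x⟫ := by
      rw [Xi'.inner_map_map, myIso_inner Vm hVm]
    have hbb : ⟪V (Xi' x), V (Xi' x)⟫ = ⟪x, x⟫ := by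
      rw [myIso_inner V hV, Xi'.inner_map_map]
    have hab : ⟪Xi' (Vm x), V (Xi' x)⟫ = ⟪x, x⟫ := by
      rw [← adjoint_inner_left, ← h2, myAdj_comp Vm hVm, Xi'.inner_map_map]
    have hba : ⟪V (Xi' x), Xi' (Vm x)⟫ = ⟪x, x⟫ := by
      rw [← inner_conj_symm, hab, inner_conj_symm]
    have hz : ⟪Xi' (Vm x) - V (Xi' x), Xi' (Vm x) - V (Xi' x)⟫ = 0 := by
      rw [inner_sub_left, inner_sub_right, inner_sub_right, haa, hab, hba, hbb]
      ring
    exact sub_eq_zero.mp (inner_self_eq_zero.mp hz)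
  have hgen : ∀ p : ℕ × H, Xi' (gm p) = gk p := by
    rintro ⟨k, h⟩
    induction k with
    | zero =>
      show Xi' ((Vm ^ 0) (Em h)) = (V ^ 0) (E h)
      simp only [pow_zero, one_apply]
      exact h1 h
    | succ k ih =>
      show Xi' ((Vm ^ (k + 1)) (Em h)) = (V ^ (k + 1)) (E h)
      rw [pow_succ', mul_apply_eq_comp, hcomm, ih, pow_succ' V k, mul_apply_eq_comp]
  have htm' : ∀ c : (ℕ × H) →₀ ℂ, Xi' (tm c) = tk c := by
    intro c
    rw [show Xi' (tm c) = Xi'.toLinearMap (tm c) from rfl, htm_def,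
      Finsupp.apply_linearCombination, htk_def]
    rw [show ⇑Xi'.toLinearMap ∘ gm = gk from funext fun p => hgen p]
  ext x
  show Xi' x = Xi0 x
  refine hdr.induction_on x (isClosed_eq Xi'.continuous Xi0.continuous) ?_
  rintro ⟨y, hy⟩
  obtain ⟨c, rfl⟩ := hy
  show Xi' (tm c) = Xi0 (tm c)
  rw [htm' c, hXi0tm c]
end
end

section
/- (Uniqueness of the minimal isometric dilation.) Let T be a contraction on a complex Hilbert space H. For j = 1, 2, let V_{m_j} be an isometry on a complex Hilbert space K_{m_j} and E_{m_j} : H → K_{m_j} a linear isometry with E_{m_j} T* = V_{m_j}* E_{m_j}, such that K_{m_j} equals the closed linear span of ⋃_{k≥0} V_{m_j}ᵏ(E_{m_j}(H)). Then there exists a unique unitary Ξ_u : K_{m_2} → K_{m_1} such that E_{m_1} = Ξ_u ∘ E_{m_2} and Ξ_u V_{m_2}* = V_{m_1}* Ξ_u. -/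
noncomputable section

open ContinuousLinearMap
open scoped InnerProductSpace

set_option maxHeartbeats 1000000

namespace MinDilAux

set_option linter.unusedSectionVars false

variable {H K : Type*} [NormedAddCommGroup H] [InnerProductSpace ℂ H] [CompleteSpace H]
  [NormedAddCommGroup K] [InnerProductSpace ℂ K] [CompleteSpace K]

lemma dil_pow (T : H →L[ℂ] H) (V : K →L[ℂ] K)
    (E : H →ₗᵢ[ℂ] K) (hE : ∀ h : H, E (adjoint T h) = adjoint V (E h)) :
    ∀ (k : ℕ) (h : H), E (((adjoint T) ^ k) h) = ((adjoint V) ^ k) (E h) := by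
  intro k
  induction k with
  | zero => intro h; simp
  | succ n ih =>
    intro h
    have h1 : ((adjoint T) ^ (n + 1)) h = ((adjoint T) ^ n) (adjoint T h) := by
      rw [pow_succ]; rfl
    have h2 : ((adjoint V) ^ (n + 1)) (E h) = ((adjoint V) ^ n) (adjoint V (E h)) := by
      rw [pow_succ]; rfl
    rw [h1, h2, ih (adjoint T h), hE]

lemma pow_inner (V : K →L[ℂ] K) (hV : ∀ x, ‖V x‖ = ‖x‖) :
    ∀ (m : ℕ) (a b : K), ⟪(V ^ m) a, (V ^ m) b⟫_ℂ = ⟪a, b⟫_ℂ := by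
  intro m
  induction m with
  | zero => intro a b; simp
  | succ n ih =>
    intro a b
    have h1 : ∀ x, (V ^ (n + 1)) x = (V ^ n) (V x) := by
      intro x; rw [pow_succ]; rfl
    rw [h1, h1, ih (V a) (V b)]
    exact (⟨(V : K →ₗ[ℂ] K), hV⟩ : K →ₗᵢ[ℂ] K).inner_map_map a b

lemma single_inner (T : H →L[ℂ] H) (V : K →L[ℂ] K)
    (E : H →ₗᵢ[ℂ] K) (hE : ∀ h : H, E (adjoint T h) = adjoint V (E h))
    (m : ℕ) (a b : H) :
    ⟪(V ^ m) (E a), E b⟫_ℂ = ⟪a, ((adjoint T) ^ m) b⟫_ℂ := by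
  have h1 : adjoint (V ^ m) = (adjoint V) ^ m := by
    rw [← star_eq_adjoint, ← star_eq_adjoint, star_pow]
  rw [← adjoint_inner_right, h1, ← dil_pow T V E hE m b]
  exact E.inner_map_map a _

lemma gen_inner (T : H →L[ℂ] H) (V : K →L[ℂ] K) (hV : ∀ x, ‖V x‖ = ‖x‖)
    (E : H →ₗᵢ[ℂ] K) (hE : ∀ h : H, E (adjoint T h) = adjoint V (E h))
    (k l : ℕ) (h g : H) :
    ⟪(V ^ k) (E h), (V ^ l) (E g)⟫_ℂ =
      if k ≤ l then ⟪((adjoint T) ^ (l - k)) h, g⟫_ℂ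
      else ⟪h, ((adjoint T) ^ (k - l)) g⟫_ℂ := by
  by_cases hkl : k ≤ l
  · rw [if_pos hkl]
    have hsplit : (V ^ l) (E g) = (V ^ k) ((V ^ (l - k)) (E g)) := by
      have : V ^ k * V ^ (l - k) = V ^ l := by
        rw [← pow_add, Nat.add_sub_cancel' hkl]
      rw [← this]; rfl
    rw [hsplit, pow_inner V hV k, ← inner_conj_symm,
      single_inner T V E hE (l - k) g h, inner_conj_symm]
  · rw [if_neg hkl]
    have hlk : l ≤ k := le_of_not_ge hkl
    have hsplit : (V ^ k) (E h) = (V ^ l) ((V ^ (k - l)) (E h)) := by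
      have : V ^ l * V ^ (k - l) = V ^ k := by
        rw [← pow_add, Nat.add_sub_cancel' hlk]
      rw [← this]; rfl
    rw [hsplit, pow_inner V hV l, single_inner T V E hE (k - l) h g]

/-- adjoint of an isometry is a left inverse -/
lemma adj_left_inv (V : K →L[ℂ] K) (hV : ∀ x, ‖V x‖ = ‖x‖) (x : K) :
    adjoint V (V x) = x := by
  apply ext_inner_right ℂ
  intro y
  rw [adjoint_inner_left]
  exact (⟨(V : K →ₗ[ℂ] K), hV⟩ : K →ₗᵢ[ℂ] K).inner_map_map x y

end MinDilAux

open MinDilAux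

set_option maxHeartbeats 1000000

/-- (Uniqueness of the minimal isometric dilation.) Any two minimal isometric
dilations `(V_{m_1}, E_{m_1})` and `(V_{m_2}, E_{m_2})` of a contraction `T` are related by a
unique unitary `Ξ_u : K_{m_2} → K_{m_1}` with `E_{m_1} = Ξ_u ∘ E_{m_2}` and
`Ξ_u V_{m_2}* = V_{m_1}* Ξ_u`. -/
theorem minimal_isometric_dilation_unique
    {H K1 K2 : Type*} [NormedAddCommGroup H] [InnerProductSpace ℂ H] [CompleteSpace H]
    [NormedAddCommGroup K1] [InnerProductSpace ℂ K1] [CompleteSpace K1]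
    [NormedAddCommGroup K2] [InnerProductSpace ℂ K2] [CompleteSpace K2]
    (T : H →L[ℂ] H) (hT : ‖T‖ ≤ 1)
    (V1 : K1 →L[ℂ] K1) (hV1 : ∀ x, ‖V1 x‖ = ‖x‖)
    (E1 : H →ₗᵢ[ℂ] K1) (hE1 : ∀ h : H, E1 (adjoint T h) = adjoint V1 (E1 h))
    (hmin1 : (Submodule.span ℂ (⋃ k : ℕ, (V1 ^ k) '' Set.range E1)).topologicalClosure = ⊤)
    (V2 : K2 →L[ℂ] K2) (hV2 : ∀ x, ‖V2 x‖ = ‖x‖)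
    (E2 : H →ₗᵢ[ℂ] K2) (hE2 : ∀ h : H, E2 (adjoint T h) = adjoint V2 (E2 h))
    (hmin2 : (Submodule.span ℂ (⋃ k : ℕ, (V2 ^ k) '' Set.range E2)).topologicalClosure = ⊤) :
    ∃! Xi : K2 ≃ₗᵢ[ℂ] K1,
      (∀ h : H, Xi (E2 h) = E1 h) ∧
      (∀ x : K2, Xi (adjoint V2 x) = adjoint V1 (Xi x)) := by
  classical
  set F2 : ℕ × H → K2 := fun p => (V2 ^ p.1) (E2 p.2) with hF2def
  set F1 : ℕ × H → K1 := fun p => (V1 ^ p.1) (E1 p.2) with hF1def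
  -- ranges of the generating families
  have hr2 : Set.range F2 = ⋃ k : ℕ, (V2 ^ k) '' Set.range E2 := by
    ext x
    simp only [Set.mem_range, Set.mem_iUnion, Set.mem_image]
    constructor
    · rintro ⟨⟨k, h⟩, rfl⟩; exact ⟨k, E2 h, ⟨h, rfl⟩, rfl⟩
    · rintro ⟨k, y, ⟨h, rfl⟩, rfl⟩; exact ⟨⟨k, h⟩, rfl⟩
  have hr1 : Set.range F1 = ⋃ k : ℕ, (V1 ^ k) '' Set.range E1 := by
    ext x
    simp only [Set.mem_range, Set.mem_iUnion, Set.mem_image]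
    constructor
    · rintro ⟨⟨k, h⟩, rfl⟩; exact ⟨k, E1 h, ⟨h, rfl⟩, rfl⟩
    · rintro ⟨k, y, ⟨h, rfl⟩, rfl⟩; exact ⟨⟨k, h⟩, rfl⟩
  -- the graph submodule
  set G : Submodule ℂ (K2 × K1) :=
    Submodule.span ℂ (Set.range fun p : ℕ × H => (F2 p, F1 p)) with hGdef
  have hinner : ∀ u ∈ G, ∀ v ∈ G, ⟪u.1, v.1⟫_ℂ = ⟪u.2, v.2⟫_ℂ := by
    intro u hu v hv
    induction hu, hv using Submodule.span_induction₂ with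
    | mem_mem x y hx hy =>
      obtain ⟨p, rfl⟩ := hx
      obtain ⟨q, rfl⟩ := hy
      simp only
      rw [gen_inner T V2 hV2 E2 hE2 p.1 q.1 p.2 q.2,
        gen_inner T V1 hV1 E1 hE1 p.1 q.1 p.2 q.2]
    | zero_left y hy => simp
    | zero_right x hx => simp
    | add_left x y z hx hy hz h1 h2 =>
      simp only [Prod.fst_add, Prod.snd_add, inner_add_left, h1, h2]
    | add_right x y z hx hy hz h1 h2 =>
      simp only [Prod.fst_add, Prod.snd_add, inner_add_right, h1, h2]
    | smul_left r x y hx hy h1 =>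
      simp only [Prod.smul_fst, Prod.smul_snd, inner_smul_left, h1]
    | smul_right r x y hx hy h1 =>
      simp only [Prod.smul_fst, Prod.smul_snd, inner_smul_right, h1]
  have hnorm : ∀ u ∈ G, ‖(u : K2 × K1).1‖ = ‖u.2‖ := by
    intro u hu
    have h := hinner u hu u hu
    have h1 : (‖u.1‖ : ℝ) ^ 2 = ‖u.2‖ ^ 2 := by
      rw [inner_self_eq_norm_sq_to_K, inner_self_eq_norm_sq_to_K] at h
      exact_mod_cast h
    rw [← Real.sqrt_sq (norm_nonneg u.1), ← Real.sqrt_sq (norm_nonneg u.2), h1]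
  -- the first projection restricted to G
  set e : G →ₗ[ℂ] K2 := (LinearMap.fst ℂ K2 K1).comp G.subtype with hedef
  have he : Function.Injective e := by
    intro a b hab
    have hmem : ((a : K2 × K1) - b) ∈ G := G.sub_mem a.2 b.2
    have h1 : ((a : K2 × K1) - b).1 = 0 := by
      have : (a : K2 × K1).1 = (b : K2 × K1).1 := hab
      simp [this]
    have h2 := hnorm _ hmem
    rw [h1] at h2
    simp only [norm_zero] at h2
    have h3 : ((a : K2 × K1) - b).2 = 0 := by
      have := h2.symm
      rwa [norm_eq_zero] at this
    apply Subtype.ext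
    apply Prod.ext
    · exact sub_eq_zero.mp h1
    · exact sub_eq_zero.mp h3
  set S2 : Submodule ℂ K2 := LinearMap.range e with hS2def
  set eqv : G ≃ₗ[ℂ] S2 := LinearEquiv.ofInjective e he with heqvdef
  set f0 : S2 →ₗ[ℂ] K1 :=
    ((LinearMap.snd ℂ K2 K1).comp G.subtype).comp (eqv.symm : S2 ≃ₗ[ℂ] G).toLinearMap
    with hf0def
  have heqv_coe : ∀ u : G, ((eqv u : S2) : K2) = (u : K2 × K1).1 := by
    intro u; rfl
  have hf0_eqv : ∀ u : G, f0 (eqv u) = (u : K2 × K1).2 := by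
    intro u
    simp only [hf0def, LinearMap.comp_apply, LinearEquiv.coe_coe,
      LinearEquiv.symm_apply_apply]
    rfl
  have hf0_iso : ∀ x : S2, ‖f0 x‖ = ‖x‖ := by
    intro x
    set u : G := eqv.symm x with hudef
    have hx : eqv u = x := by rw [hudef, LinearEquiv.apply_symm_apply]
    have h1 : f0 x = (u : K2 × K1).2 := by rw [← hx, hf0_eqv]
    have h2 : (x : K2) = (u : K2 × K1).1 := by rw [← hx, heqv_coe]
    have h3 := hnorm _ u.2
    rw [h1, ← h3, ← h2]
    rfl
  set fiso : S2 →ₗᵢ[ℂ] K1 := ⟨f0, hf0_iso⟩ with hfisodef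
  set fc : S2 →L[ℂ] K1 := fiso.toContinuousLinearMap with hfcdef
  -- S2 is the span of the generators, hence dense
  have hS2span : S2 = Submodule.span ℂ (Set.range F2) := by
    have h1 : S2 = Submodule.map (LinearMap.fst ℂ K2 K1) G := by
      rw [hS2def, hedef, LinearMap.range_comp, Submodule.range_subtype]
    rw [h1, hGdef, Submodule.map_span]
    congr 1
    rw [← Set.range_comp]
    rfl
  have hd2 : Dense (S2 : Set K2) := by
    rw [Submodule.dense_iff_topologicalClosure_eq_top, hS2span, hr2]
    exact hmin2
  have h_dense : DenseRange (S2.subtypeL) := by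
    have : Set.range (S2.subtypeL) = (S2 : Set K2) := Subtype.range_coe
    rw [DenseRange, this]
    exact hd2
  have h_ui : IsUniformInducing (S2.subtypeL) :=
    (isometry_subtype_coe (s := (S2 : Set K2))).isUniformInducing
  set F : K2 →L[ℂ] K1 := fc.extend S2.subtypeL with hFdef
  have hFe : ∀ x : S2, F (x : K2) = f0 x := by
    intro x
    have := ContinuousLinearMap.extend_eq (f := fc) (e := S2.subtypeL) h_dense h_ui x
    exact this
  -- F maps generators to generators
  have hmemS2 : ∀ p : ℕ × H, F2 p ∈ S2 := by
    intro p
    rw [hS2span]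
    exact Submodule.subset_span ⟨p, rfl⟩
  have hFgen : ∀ p : ℕ × H, F (F2 p) = F1 p := by
    intro p
    set u : G := ⟨(F2 p, F1 p), Submodule.subset_span ⟨p, rfl⟩⟩ with hudef
    have h2 : ((eqv u : S2) : K2) = F2 p := heqv_coe u
    have := hFe (eqv u)
    rw [h2] at this
    rw [this, hf0_eqv u]
  have hFiso : ∀ x : K2, ‖F x‖ = ‖x‖ := by
    have hclosed : IsClosed {x : K2 | ‖F x‖ = ‖x‖} :=
      isClosed_eq F.continuous.norm continuous_norm
    have hsub : (S2 : Set K2) ⊆ {x : K2 | ‖F x‖ = ‖x‖} := by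
      rintro x hx
      have := hFe ⟨x, hx⟩
      simp only [Set.mem_setOf_eq]
      rw [this, hf0_iso ⟨x, hx⟩]
      rfl
    have h1 : closure (S2 : Set K2) ⊆ {x : K2 | ‖F x‖ = ‖x‖} :=
      closure_minimal hsub hclosed
    rw [hd2.closure_eq] at h1
    intro x
    exact h1 (Set.mem_univ x)
  set Fiso : K2 →ₗᵢ[ℂ] K1 := ⟨(F : K2 →ₗ[ℂ] K1), hFiso⟩ with hFisodef
  have hFiso_coe : ∀ x, Fiso x = F x := fun _ => rfl
  -- surjectivity
  have hsurj : Function.Surjective Fiso := by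
    have hclosed : IsClosed (Set.range F) := by
      have hi : Isometry F := AddMonoidHomClass.isometry_of_norm _ hFiso
      exact hi.isClosedEmbedding.isClosed_range
    have hsub : (Submodule.span ℂ (Set.range F1) : Set K1) ⊆ Set.range F := by
      have h1 : Set.range F1 ⊆ Set.range F := by
        rintro y ⟨p, rfl⟩
        exact ⟨F2 p, hFgen p⟩
      have h2 : Submodule.span ℂ (Set.range F1) ≤ LinearMap.range (F : K2 →ₗ[ℂ] K1) := by
        rw [Submodule.span_le]
        rintro y ⟨p, rfl⟩
        exact ⟨F2 p, hFgen p⟩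
      intro y hy
      exact h2 hy
    have h3 : closure (Submodule.span ℂ (Set.range F1) : Set K1) ⊆ Set.range F :=
      closure_minimal hsub hclosed
    have h4 : Dense (Submodule.span ℂ (Set.range F1) : Set K1) := by
      rw [Submodule.dense_iff_topologicalClosure_eq_top, hr1]
      exact hmin1
    rw [h4.closure_eq] at h3
    intro y
    exact h3 (Set.mem_univ y)
  set Xi : K2 ≃ₗᵢ[ℂ] K1 := LinearIsometryEquiv.ofSurjective Fiso hsurj with hXidef
  have hXi_coe : ∀ x, Xi x = F x := by
    intro x
    rw [hXidef]
    rw [LinearIsometryEquiv.coe_ofSurjective]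
    rfl
  have hdense_span :
      Dense ((Submodule.span ℂ (Set.range F2) : Submodule ℂ K2) : Set K2) := by
    rw [← hS2span]; exact hd2
  -- property 1
  have hprop1 : ∀ h : H, Xi (E2 h) = E1 h := by
    intro h
    have h0 : F (F2 (0, h)) = F1 (0, h) := hFgen (0, h)
    have h2 : F2 (0, h) = E2 h := by
      show (V2 ^ 0) (E2 h) = E2 h
      simp
    have h3 : F1 (0, h) = E1 h := by
      show (V1 ^ 0) (E1 h) = E1 h
      simp
    rw [hXi_coe, ← h2, h0, h3]
  -- intertwining with the adjoints
  have hVV2 := adj_left_inv V2 hV2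
  have hVV1 := adj_left_inv V1 hV1
  have hgen2 : ∀ p : ℕ × H, F (adjoint V2 (F2 p)) = adjoint V1 (F (F2 p)) := by
    rintro ⟨k, h⟩
    cases k with
    | zero =>
      have h1 : adjoint V2 (F2 (0, h)) = F2 (0, adjoint T h) := by
        show adjoint V2 ((V2 ^ 0) (E2 h)) = (V2 ^ 0) (E2 (adjoint T h))
        simp only [pow_zero, ContinuousLinearMap.one_apply]
        exact (hE2 h).symm
      rw [h1, hFgen, hFgen]
      show (V1 ^ 0) (E1 (adjoint T h)) = adjoint V1 ((V1 ^ 0) (E1 h))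
      simp only [pow_zero, ContinuousLinearMap.one_apply]
      exact hE1 h
    | succ n =>
      have h1 : adjoint V2 (F2 (n + 1, h)) = F2 (n, h) := by
        show adjoint V2 ((V2 ^ (n + 1)) (E2 h)) = (V2 ^ n) (E2 h)
        have hh : (V2 ^ (n + 1)) (E2 h) = V2 ((V2 ^ n) (E2 h)) := by
          rw [pow_succ', ContinuousLinearMap.mul_apply]
        rw [hh, hVV2]
      have h2 : adjoint V1 (F1 (n + 1, h)) = F1 (n, h) := by
        show adjoint V1 ((V1 ^ (n + 1)) (E1 h)) = (V1 ^ n) (E1 h)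
        have hh : (V1 ^ (n + 1)) (E1 h) = V1 ((V1 ^ n) (E1 h)) := by
          rw [pow_succ', ContinuousLinearMap.mul_apply]
        rw [hh, hVV1]
      rw [h1, hFgen, hFgen, h2]
  have hcomm : ∀ x : K2, F (adjoint V2 x) = adjoint V1 (F x) := by
    set g1 : K2 →L[ℂ] K1 := F.comp (adjoint V2) with hg1def
    set g2 : K2 →L[ℂ] K1 := (adjoint V1).comp F with hg2def
    have hEqOn : Set.EqOn ⇑g1 ⇑g2 (Set.range F2) := by
      rintro x ⟨p, rfl⟩
      show g1 (F2 p) = g2 (F2 p)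
      rw [hg1def, hg2def]
      simp only [ContinuousLinearMap.comp_apply]
      exact hgen2 p
    have hspan : Set.EqOn ⇑g1 ⇑g2
        ((Submodule.span ℂ (Set.range F2) : Submodule ℂ K2) : Set K2) := by
      intro x hx
      exact LinearMap.eqOn_span hEqOn hx
    have heq : ⇑g1 = ⇑g2 :=
      Continuous.ext_on hdense_span g1.continuous g2.continuous hspan
    intro x
    have := congrFun heq (x)
    simpa [hg1def, hg2def] using this
  have hprop2 : ∀ x : K2, Xi (adjoint V2 x) = adjoint V1 (Xi x) := by
    intro x
    rw [hXi_coe, hXi_coe]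
    exact hcomm x
  refine ⟨Xi, ⟨hprop1, hprop2⟩, ?_⟩
  rintro Xi' ⟨h1', h2'⟩
  -- Xi' intertwines V2 and V1 themselves
  have hV' : ∀ x : K2, Xi' (V2 x) = V1 (Xi' x) := by
    intro x
    apply ext_inner_right ℂ
    intro y
    have hy : Xi' (adjoint V2 (Xi'.symm y)) = adjoint V1 y := by
      have := h2' (Xi'.symm y)
      rwa [Xi'.apply_symm_apply] at this
    have hy2 : adjoint V2 (Xi'.symm y) = Xi'.symm (adjoint V1 y) := by
      rw [← hy, Xi'.symm_apply_apply]
    calc ⟪Xi' (V2 x), y⟫_ℂ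
        = ⟪Xi' (V2 x), Xi' (Xi'.symm y)⟫_ℂ := by rw [Xi'.apply_symm_apply]
      _ = ⟪V2 x, Xi'.symm y⟫_ℂ := Xi'.inner_map_map _ _
      _ = ⟪x, adjoint V2 (Xi'.symm y)⟫_ℂ := by rw [adjoint_inner_right]
      _ = ⟪x, Xi'.symm (adjoint V1 y)⟫_ℂ := by rw [hy2]
      _ = ⟪Xi' x, Xi' (Xi'.symm (adjoint V1 y))⟫_ℂ := (Xi'.inner_map_map _ _).symm
      _ = ⟪Xi' x, adjoint V1 y⟫_ℂ := by rw [Xi'.apply_symm_apply]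
      _ = ⟪V1 (Xi' x), y⟫_ℂ := by rw [adjoint_inner_right]
  have hgen' : ∀ (k : ℕ) (h : H), Xi' ((V2 ^ k) (E2 h)) = (V1 ^ k) (E1 h) := by
    intro k h
    induction k with
    | zero =>
      simp only [pow_zero, ContinuousLinearMap.one_apply]
      exact h1' h
    | succ n ih =>
      have e2' : (V2 ^ (n + 1)) (E2 h) = V2 ((V2 ^ n) (E2 h)) := by
        rw [pow_succ', ContinuousLinearMap.mul_apply]
      have e1' : (V1 ^ (n + 1)) (E1 h) = V1 ((V1 ^ n) (E1 h)) := by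
        rw [pow_succ', ContinuousLinearMap.mul_apply]
      rw [e2', hV', ih, e1']
  have hEqOn' : Set.EqOn ⇑Xi' ⇑Xi (Set.range F2) := by
    rintro x ⟨p, rfl⟩
    show Xi' (F2 p) = Xi (F2 p)
    rw [hXi_coe, hFgen p]
    exact hgen' p.1 p.2
  have hspan' : Set.EqOn ⇑Xi' ⇑Xi
      ((Submodule.span ℂ (Set.range F2) : Submodule ℂ K2) : Set K2) := by
    intro x hx
    exact LinearMap.eqOn_span (f := Xi'.toLinearIsometry.toLinearMap) (g := Xi.toLinearIsometry.toLinearMap)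
      hEqOn' hx
  have heq : ⇑Xi' = ⇑Xi :=
    Continuous.ext_on hdense_span Xi'.continuous Xi.continuous hspan'
  exact LinearIsometryEquiv.ext fun x => congrFun heq x
end
end
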